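/- Let n ≥ 1 and let 0 = W_0 < W_1 < ⋯ < W_n be real numbers, with a_i = W_i − W_{i−1}. Let B = [0,W_1] × ⋯ × [0,W_n] and for a permutation π of {1,…,n} let C_π = {x ∈ B : x_{π(1)} ≥ ⋯ ≥ x_{π(n)}}. For a sequence λ ∈ {1,…,n}^n, let G_λ be the stabilizer of λ under the coordinate-permuting action of S_n on {1,…,n}^n, and let λ^max(π)_i = min{π(1),…,π(i)}. Then Vol(C_π) = Σ_λ (1/|G_λ|) · a_{λ_1} a_{λ_2} ⋯ a_{λ_n}, where the sum is over all weakly decreasing sequences λ ∈ {1,…,n}^n with λ_i ≤ λ^max(π)_i for all i. -/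

import Mathlib

open MeasureTheory

/-- The box `[0, W₁] × ⋯ × [0, Wₙ]` (0-indexed: coordinate `i` ranges over `[0, W (i+1)]`). -/
def box (n : ℕ) (W : ℕ → ℝ) : Set (Fin n → ℝ) :=
  {x | ∀ i : Fin n, x i ∈ Set.Icc 0 (W ((i : ℕ) + 1))}

/-- The region `C_π = {x ∈ B : x_{π(1)} ≥ x_{π(2)} ≥ ⋯ ≥ x_{π(n)}}`. -/
def Cpi (n : ℕ) (W : ℕ → ℝ) (π : Equiv.Perm (Fin n)) : Set (Fin n → ℝ) :=
  {x ∈ box n W | ∀ i j : Fin n, i ≤ j → x (π j) ≤ x (π i)}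

/-- `λ^max(π)ᵢ = min{π(1), …, π(i)}` (1-indexed values, so `π j` contributes `(π j : ℕ) + 1`). -/
def lamMax (n : ℕ) (π : Equiv.Perm (Fin n)) (i : Fin n) : ℕ :=
  (Finset.Iic i).inf' ⟨i, Finset.mem_Iic.mpr le_rfl⟩ (fun j => (π j : ℕ) + 1)

/-- The stabilizer `G_ρ ≤ Sₙ` of `ρ` under the coordinate-permuting action
`(σ • ρ) i = ρ (σ⁻¹ i)` (equivalently, `τ` stabilizes `ρ` iff `ρ ∘ τ = ρ`). -/
def stab (n : ℕ) (ρ : Fin n → Fin n) : Subgroup (Equiv.Perm (Fin n)) where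
  carrier := {τ | ρ ∘ ⇑τ = ρ}
  one_mem' := rfl
  mul_mem' := by
    intro a b ha hb
    simp only [Set.mem_setOf_eq] at *
    show ρ ∘ (⇑a ∘ ⇑b) = ρ
    rw [← Function.comp_assoc, ha, hb]
  inv_mem' := by
    intro a ha
    simp only [Set.mem_setOf_eq] at *
    funext i
    have h := congrFun ha (a⁻¹ i)
    simpa using h.symm

/-! ### Auxiliary lemmas -/

open scoped ENNReal
set_option linter.unusedSectionVars false

section SortPerm
variable {ι : Type} [Fintype ι] [LinearOrder ι]

lemma le_perm_apply (ρ : Equiv.Perm ι) (h : StrictMono ρ) (i : ι) : i ≤ ρ i := by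
  by_contra hlt
  push_neg at hlt
  classical
  set sf := Finset.univ.filter (fun j : ι => ρ j < j) with hsf
  have hne : sf.Nonempty := ⟨i, by simp [hsf, hlt]⟩
  set i0 := sf.min' hne with hi0
  have h0 : ρ i0 < i0 := by
    have := Finset.mem_filter.mp (sf.min'_mem hne)
    exact this.2
  have h2 : ρ i0 ∈ sf := by simp only [hsf, Finset.mem_filter]; exact ⟨Finset.mem_univ _, h h0⟩
  exact absurd (sf.min'_le _ h2) (not_le.mpr h0)

lemma perm_strictMono_eq (ρ : Equiv.Perm ι) (h : StrictMono ρ) : ρ = Equiv.refl ι := by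
  have hsymm : StrictMono (ρ.symm : ι → ι) := by
    intro u v huv
    rw [← ρ.apply_symm_apply u, ← ρ.apply_symm_apply v] at huv
    exact (h.lt_iff_lt).mp huv
  ext i
  have h1 := le_perm_apply ρ h i
  have h2 := le_perm_apply ρ.symm hsymm (ρ i)
  rw [Equiv.symm_apply_apply] at h2
  exact le_antisymm h2 h1

end SortPerm

section Simplex
variable {ι : Type} [Fintype ι] [LinearOrder ι]

def simplexSet (ι : Type) [Fintype ι] [LinearOrder ι] (a b : ℝ) : Set (ι → ℝ) :=
  {y | (∀ i, y i ∈ Set.Ioc a b) ∧ ∀ i j : ι, i ≤ j → y j ≤ y i}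

def strictSet (σ : Equiv.Perm ι) (a b : ℝ) : Set (ι → ℝ) :=
  {y | (∀ i, y i ∈ Set.Ioc a b) ∧ ∀ i j : ι, i < j → y (σ j) < y (σ i)}

def badSet (ι : Type) [Fintype ι] [LinearOrder ι] : Set (ι → ℝ) :=
  ⋃ (p : ι × ι) (_ : p.1 ≠ p.2), {y : ι → ℝ | y p.1 = y p.2}

lemma measurableSet_simplexSet (a b : ℝ) : MeasurableSet (simplexSet ι a b) := by
  have h1 : simplexSet ι a b =
      (⋂ i, (fun y : ι → ℝ => y i) ⁻¹' Set.Ioc a b) ∩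
      (⋂ i, ⋂ j, ⋂ (_ : i ≤ j), {y : ι → ℝ | y j ≤ y i}) := by
    ext y
    simp only [simplexSet, Set.mem_inter_iff, Set.mem_iInter, Set.mem_setOf_eq, Set.mem_preimage]
  rw [h1]
  exact (MeasurableSet.iInter fun i => (measurable_pi_apply i) measurableSet_Ioc).inter
    (MeasurableSet.iInter fun i => MeasurableSet.iInter fun j => MeasurableSet.iInter fun _ =>
      measurableSet_le (measurable_pi_apply _) (measurable_pi_apply _))

lemma measurableSet_strictSet (σ : Equiv.Perm ι) (a b : ℝ) :
    MeasurableSet (strictSet σ a b) := by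
  have h1 : strictSet σ a b =
      (⋂ i, (fun y : ι → ℝ => y i) ⁻¹' Set.Ioc a b) ∩
      (⋂ i, ⋂ j, ⋂ (_ : i < j), {y : ι → ℝ | y (σ j) < y (σ i)}) := by
    ext y
    simp only [strictSet, Set.mem_inter_iff, Set.mem_iInter, Set.mem_setOf_eq, Set.mem_preimage]
  rw [h1]
  exact (MeasurableSet.iInter fun i => (measurable_pi_apply i) measurableSet_Ioc).inter
    (MeasurableSet.iInter fun i => MeasurableSet.iInter fun j => MeasurableSet.iInter fun _ =>
      measurableSet_lt (measurable_pi_apply _) (measurable_pi_apply _))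

lemma volume_eq_coords (i j : ι) (hij : i ≠ j) : volume {y : ι → ℝ | y i = y j} = 0 := by
  have hset : {y : ι → ℝ | y i = y j} =
      (LinearMap.ker ((LinearMap.proj i : (ι → ℝ) →ₗ[ℝ] ℝ) - LinearMap.proj j) :
        Submodule ℝ (ι → ℝ)) := by
    ext y
    simp [LinearMap.mem_ker, sub_eq_zero]
  rw [hset]
  refine Measure.addHaar_submodule _ _ ?_
  intro htop
  have hmem : (Pi.single i 1 : ι → ℝ) ∈
      LinearMap.ker ((LinearMap.proj i : (ι → ℝ) →ₗ[ℝ] ℝ) - LinearMap.proj j) := by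
    rw [htop]; trivial
  rw [LinearMap.mem_ker] at hmem
  simp only [LinearMap.sub_apply, LinearMap.proj_apply] at hmem
  rw [Pi.single_eq_same, Pi.single_eq_of_ne (Ne.symm hij)] at hmem
  norm_num at hmem

lemma volume_badSet : volume (badSet ι) = 0 :=
  measure_iUnion_null fun p => measure_iUnion_null fun hp => volume_eq_coords _ _ hp

lemma mp_comp (σ : Equiv.Perm ι) : MeasurePreserving (fun y : ι → ℝ => y ∘ σ) volume volume := by
  have := (volume_measurePreserving_piCongrLeft (fun _ : ι => ℝ) σ).symm
    (MeasurableEquiv.piCongrLeft (fun _ : ι => ℝ) σ)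
  convert this using 1
  all_goals rfl

lemma cube_subset_union (a b : ℝ) :
    {y : ι → ℝ | ∀ i, y i ∈ Set.Ioc a b} ⊆
      (⋃ σ : Equiv.Perm ι, strictSet σ a b) ∪ badSet ι := by
  intro y hy
  by_cases hN : y ∈ badSet ι
  · exact Or.inr hN
  left
  have hinj : Function.Injective y := by
    intro u v huv
    by_contra huvne
    exact hN (Set.mem_iUnion.mpr ⟨(u, v), Set.mem_iUnion.mpr ⟨huvne, huv⟩⟩)
  set f := monoEquivOfFin ι rfl with hf
  set z : Fin (Fintype.card ι) → ℝ := y ∘ f with hz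
  have hzinj : Function.Injective z := hinj.comp f.injective
  set τ0 := Tuple.sort z with hτ0
  have hw : StrictMono (z ∘ τ0) :=
    (Tuple.monotone_sort z).strictMono_of_injective (hzinj.comp τ0.injective)
  set σ : Equiv.Perm ι := f.toEquiv.permCongr (Fin.revPerm.trans τ0) with hσ
  refine Set.mem_iUnion.mpr ⟨σ, hy, fun i j hij => ?_⟩
  have hval : ∀ x : ι, y (σ x) = (z ∘ τ0) ((f.symm x).rev) := by
    intro x
    simp [hσ, hz, Equiv.permCongr_apply]
  rw [hval i, hval j]
  apply hw
  exact Fin.rev_lt_rev.mpr (f.symm.strictMono hij)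

lemma strictSet_pairwise (a b : ℝ) :
    Pairwise (Function.onFun Disjoint (fun σ : Equiv.Perm ι => strictSet σ a b)) := by
  intro σ τ hστ
  rw [Function.onFun, Set.disjoint_left]
  rintro y ⟨-, hyσ⟩ ⟨-, hyτ⟩
  apply hστ
  set ρ : Equiv.Perm ι := τ.trans σ.symm with hρ
  have hσρ : ∀ x, σ (ρ x) = τ x := fun x => σ.apply_symm_apply (τ x)
  have hmono : StrictMono (ρ : ι → ι) := by
    intro i j hij
    have h1 : y (τ j) < y (τ i) := hyτ i j hij
    rcases lt_trichotomy (ρ i) (ρ j) with h | h | h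
    · exact h
    · exfalso; rw [← hσρ i, ← hσρ j, h] at h1; exact lt_irrefl _ h1
    · exfalso
      have := hyσ _ _ h
      rw [hσρ i, hσρ j] at this
      exact lt_irrefl _ (h1.trans this)
  have heq := perm_strictMono_eq ρ hmono
  ext x
  rw [← hσρ x, heq]
  rfl

lemma volume_strictSet_eq (σ : Equiv.Perm ι) (a b : ℝ) :
    volume (strictSet σ a b) = volume (strictSet (Equiv.refl ι) a b) := by
  have hpre : (fun y : ι → ℝ => y ∘ σ) ⁻¹' strictSet (Equiv.refl ι) a b = strictSet σ a b := by
    ext y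
    constructor
    · rintro ⟨h1, h2⟩
      refine ⟨fun i => ?_, fun i j hij => h2 i j hij⟩
      have := h1 (σ.symm i)
      simpa using this
    · rintro ⟨h1, h2⟩
      exact ⟨fun i => h1 (σ i), fun i j hij => h2 i j hij⟩
  rw [← hpre]
  exact (mp_comp σ).measure_preimage (measurableSet_strictSet _ _ _).nullMeasurableSet

lemma volume_simplexSet (a b : ℝ) (hab : a ≤ b) :
    volume (simplexSet ι a b) =
      ENNReal.ofReal ((b - a) ^ Fintype.card ι / (Fintype.card ι).factorial) := by
  classical
  set m := Fintype.card ι with hm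
  set Cu : Set (ι → ℝ) := {y | ∀ i, y i ∈ Set.Ioc a b} with hCu
  have hCuvol : volume Cu = ENNReal.ofReal ((b - a) ^ m) := by
    have h1 : Cu = Set.pi Set.univ (fun _ : ι => Set.Ioc a b) := by
      ext y; simp [hCu, Set.mem_pi]
    rw [h1, volume_pi_pi]
    simp only [Real.volume_Ioc, Finset.prod_const, Finset.card_univ]
    rw [← ENNReal.ofReal_pow (by linarith)]
  set U : Set (ι → ℝ) := ⋃ σ : Equiv.Perm ι, strictSet σ a b with hU
  set A : Set (ι → ℝ) := strictSet (Equiv.refl ι) a b with hA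
  have hUvol : volume U = (m).factorial * volume A := by
    rw [hU, measure_iUnion (strictSet_pairwise a b) (fun σ => measurableSet_strictSet σ a b),
      tsum_fintype]
    rw [Finset.sum_congr rfl (fun σ _ => volume_strictSet_eq σ a b), Finset.sum_const,
      Finset.card_univ, Fintype.card_perm, nsmul_eq_mul]
  have hsub1 : U ⊆ Cu := Set.iUnion_subset fun σ y hy => hy.1
  have hCuU : volume Cu = volume U :=
    le_antisymm
      (le_trans (measure_mono (cube_subset_union a b))
        (le_trans (measure_union_le _ _) (by rw [volume_badSet]; simp; rfl)))
      (measure_mono hsub1)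
  have hA1 : A ⊆ simplexSet ι a b := by
    rintro y ⟨h1, h2⟩
    refine ⟨h1, fun i j hij => ?_⟩
    rcases eq_or_lt_of_le hij with rfl | h
    · exact le_rfl
    · exact (h2 i j h).le
  have hA2 : simplexSet ι a b ⊆ A ∪ badSet ι := by
    intro y hy
    by_cases hN : y ∈ badSet ι
    · exact Or.inr hN
    left
    refine ⟨hy.1, fun i j hij => ?_⟩
    rcases lt_or_eq_of_le (hy.2 i j hij.le) with h | h
    · exact h
    · exact absurd (Set.mem_iUnion.mpr ⟨(j, i), Set.mem_iUnion.mpr ⟨hij.ne', h⟩⟩) hN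
  have hvs : volume (simplexSet ι a b) = volume A :=
    le_antisymm
      (le_trans (measure_mono hA2)
        (le_trans (measure_union_le _ _) (by rw [volume_badSet]; simp)))
      (measure_mono hA1)
  have key : ENNReal.ofReal ((b - a) ^ m) = ((m).factorial : ℝ≥0∞) * volume A := by
    rw [← hCuvol, hCuU, hUvol]
  have hfact : ((m).factorial : ℝ≥0∞) ≠ 0 := Nat.cast_ne_zero.mpr (Nat.factorial_ne_zero m)
  have hfact' : ((m).factorial : ℝ≥0∞) ≠ ⊤ := ENNReal.natCast_ne_top _
  have h2 : ENNReal.ofReal ((b - a) ^ m / (m).factorial)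
      = ENNReal.ofReal ((b - a) ^ m) / ((m).factorial : ℝ≥0∞) := by
    rw [ENNReal.ofReal_div_of_pos (by positivity), ENNReal.ofReal_natCast]
  rw [hvs, h2, ENNReal.eq_div_iff hfact hfact']
  exact key.symm

end Simplex

def blockSet (ι : Type) [Fintype ι] [LinearOrder ι] (lam : ι → ℕ) (c d : ℕ → ℝ) :
    Set (ι → ℝ) :=
  {y | (∀ i, y i ∈ Set.Ioc (c (lam i)) (d (lam i))) ∧
    ∀ i j : ι, i ≤ j → lam i = lam j → y j ≤ y i}

lemma measurableSet_blockSet (ι : Type) [Fintype ι] [LinearOrder ι] (lam : ι → ℕ)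
    (c d : ℕ → ℝ) : MeasurableSet (blockSet ι lam c d) := by
  have h1 : blockSet ι lam c d =
      (⋂ i, (fun y : ι → ℝ => y i) ⁻¹' Set.Ioc (c (lam i)) (d (lam i))) ∩
      (⋂ i, ⋂ j, ⋂ (_ : i ≤ j), ⋂ (_ : lam i = lam j), {y : ι → ℝ | y j ≤ y i}) := by
    ext y
    simp only [blockSet, Set.mem_inter_iff, Set.mem_iInter, Set.mem_setOf_eq, Set.mem_preimage]
  rw [h1]
  exact (MeasurableSet.iInter fun i => (measurable_pi_apply i) measurableSet_Ioc).inter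
    (MeasurableSet.iInter fun i => MeasurableSet.iInter fun j => MeasurableSet.iInter fun _ =>
      MeasurableSet.iInter fun _ =>
        measurableSet_le (measurable_pi_apply _) (measurable_pi_apply _))

lemma volume_blockSet :
    ∀ (m : ℕ) (ι : Type) [Fintype ι] [LinearOrder ι] (lam : ι → ℕ) (c d : ℕ → ℝ),
      (∀ i, c (lam i) ≤ d (lam i)) → (Finset.image lam Finset.univ).card = m →
      volume (blockSet ι lam c d) =
        ∏ k ∈ Finset.image lam Finset.univ,
          ENNReal.ofReal ((d k - c k) ^ (Nat.card {i // lam i = k}) /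
            (Nat.card {i // lam i = k}).factorial) := by
  intro m
  induction m using Nat.strong_induction_on with
  | _ m IH =>
    intro ι _ _ lam c d hcd hcard
    classical
    rcases Finset.eq_empty_or_nonempty (Finset.image lam Finset.univ) with hemp | ⟨k₀, hk₀⟩
    · have hie : IsEmpty ι := by
        rw [← Finset.univ_eq_empty_iff]
        by_contra h
        rcases Finset.nonempty_iff_ne_empty.mpr h with ⟨i, -⟩
        exact absurd (Finset.mem_image_of_mem lam (Finset.mem_univ i))
          (by rw [hemp]; exact Finset.notMem_empty _)
      rw [hemp, Finset.prod_empty]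
      have huniv : blockSet ι lam c d = Set.univ :=
        Set.eq_univ_of_forall fun y => ⟨fun i => isEmptyElim i, fun i => isEmptyElim i⟩
      rw [huniv, volume_pi, Measure.pi_univ]
      simp
    · have hm : 0 < m := by
        rw [← hcard]
        exact Finset.card_pos.mpr ⟨k₀, hk₀⟩
      have he : ∀ y : ι → ℝ,
          (MeasurableEquiv.piEquivPiSubtypeProd (fun _ : ι => ℝ) (fun i => lam i = k₀)) y =
            (fun i : {i // lam i = k₀} => y i.val,
             fun i : {i // ¬ lam i = k₀} => y i.val) := fun _ => rfl
      have hsplit : blockSet ι lam c d =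
          (MeasurableEquiv.piEquivPiSubtypeProd (fun _ : ι => ℝ) (fun i => lam i = k₀)) ⁻¹'
            ((simplexSet {i // lam i = k₀} (c k₀) (d k₀)) ×ˢ
              (blockSet {i // ¬ lam i = k₀} (fun i => lam i.val) c d)) := by
        ext y
        rw [Set.mem_preimage, he, Set.mem_prod]
        constructor
        · rintro ⟨h1, h2⟩
          refine ⟨⟨fun i => ?_, fun i j hij => ?_⟩,
            ⟨fun i => h1 i.val,
             fun i j hij hlij => h2 i.val j.val (Subtype.coe_le_coe.mpr hij) hlij⟩⟩
          · have := h1 i.val; rwa [i.2] at this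
          · exact h2 i.val j.val (Subtype.coe_le_coe.mpr hij) (i.2.trans j.2.symm)
        · rintro ⟨⟨hS1, hS2⟩, hG1, hG2⟩
          constructor
          · intro i
            by_cases hpi : lam i = k₀
            · have := hS1 ⟨i, hpi⟩; simp only at this; rwa [← hpi] at this
            · exact hG1 ⟨i, hpi⟩
          · intro i j hij hlij
            by_cases hpi : lam i = k₀
            · exact hS2 ⟨i, hpi⟩ ⟨j, hlij.symm.trans hpi⟩ (Subtype.mk_le_mk.mpr hij)
            · exact hG2 ⟨i, hpi⟩ ⟨j, fun h => hpi (hlij.trans h)⟩ (Subtype.mk_le_mk.mpr hij) hlij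
      have hck₀ : c k₀ ≤ d k₀ := by
        rcases Finset.mem_image.mp hk₀ with ⟨i, -, rfl⟩
        exact hcd i
      have himg : Finset.image (fun i : {i // ¬ lam i = k₀} => lam i.val) Finset.univ
          = (Finset.image lam Finset.univ).erase k₀ := by
        ext k
        simp only [Finset.mem_image, Finset.mem_erase, Finset.mem_univ, true_and]
        constructor
        · rintro ⟨⟨i, hi⟩, rfl⟩
          exact ⟨fun h => hi h, ⟨i, rfl⟩⟩
        · rintro ⟨hne, i, rfl⟩
          exact ⟨⟨i, fun h => hne h⟩, rfl⟩
      have hfib : ∀ k, k ≠ k₀ →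
          Nat.card {i : {i // ¬ lam i = k₀} // lam i.val = k} = Nat.card {i : ι // lam i = k} := by
        intro k hk
        refine Nat.card_congr ?_
        refine (Equiv.subtypeSubtypeEquivSubtypeInter (fun i : ι => ¬ lam i = k₀)
          (fun i => lam i = k)).trans (Equiv.subtypeEquivRight ?_)
        intro i
        exact ⟨fun h => h.2, fun h => ⟨fun h' => hk (h.symm.trans h'), h⟩⟩
      have hmeasS : MeasurableSet (simplexSet {i // lam i = k₀} (c k₀) (d k₀)) :=
        measurableSet_simplexSet _ _
      have hmeasG : MeasurableSet (blockSet {i // ¬ lam i = k₀} (fun i => lam i.val) c d) :=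
        measurableSet_blockSet _ _ _ _
      rw [hsplit,
        MeasurePreserving.measure_preimage
          (volume_preserving_piEquivPiSubtypeProd (fun _ : ι => ℝ) (fun i => lam i = k₀))
          (hmeasS.prod hmeasG).nullMeasurableSet,
        Measure.volume_eq_prod, Measure.prod_prod,
        volume_simplexSet _ _ hck₀,
        IH (m - 1) (by omega) _ (fun i : {i // ¬ lam i = k₀} => lam i.val) c d
          (fun i => hcd i.val)
          (by rw [himg, Finset.card_erase_of_mem hk₀, hcard]),
        himg, ← Finset.mul_prod_erase _ _ hk₀]
      congr 1
      · rw [Nat.card_eq_fintype_card]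
      · refine Finset.prod_congr rfl fun k hk => ?_
        rw [hfib k (Finset.ne_of_mem_erase hk)]

def gradedSet (ι : Type) [Fintype ι] [LinearOrder ι] (c d : ι → ℝ) : Set (ι → ℝ) :=
  {y | (∀ i, y i ∈ Set.Ioc (c i) (d i)) ∧ ∀ i j : ι, i ≤ j → y j ≤ y i}

lemma measurableSet_gradedSet (ι : Type) [Fintype ι] [LinearOrder ι] (c d : ι → ℝ) :
    MeasurableSet (gradedSet ι c d) := by
  have h1 : gradedSet ι c d =
      (⋂ i, (fun y : ι → ℝ => y i) ⁻¹' Set.Ioc (c i) (d i)) ∩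
      (⋂ i, ⋂ j, ⋂ (_ : i ≤ j), {y : ι → ℝ | y j ≤ y i}) := by
    ext y
    simp only [gradedSet, Set.mem_inter_iff, Set.mem_iInter, Set.mem_setOf_eq, Set.mem_preimage]
  rw [h1]
  exact (MeasurableSet.iInter fun i => (measurable_pi_apply i) measurableSet_Ioc).inter
    (MeasurableSet.iInter fun i => MeasurableSet.iInter fun j => MeasurableSet.iInter fun _ =>
      measurableSet_le (measurable_pi_apply _) (measurable_pi_apply _))

open Classical in
theorem volume_Cpi_eq_sum (n : ℕ) (hn : 1 ≤ n) (W : ℕ → ℝ) (hW0 : W 0 = 0)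
    (hW : ∀ i, i < n → W i < W (i + 1))
    (π : Equiv.Perm (Fin n)) :
    volume (Cpi n W π) =
      ∑ lam ∈ Finset.univ.filter (fun lam : Fin n → Fin n =>
          (∀ i j : Fin n, i ≤ j → lam j ≤ lam i) ∧
            ∀ i : Fin n, (lam i : ℕ) + 1 ≤ lamMax n π i),
        ENNReal.ofReal
          ((∏ i : Fin n, (W ((lam i : ℕ) + 1) - W ((lam i : ℕ)))) /
            (Nat.card (stab n lam) : ℝ)) := by
  classical
  have hWmono : ∀ l, l ≤ n → ∀ k, k ≤ l → W k ≤ W l := by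
    intro l
    induction l with
    | zero => intro _ k hk; interval_cases k; exact le_rfl
    | succ l ih =>
      intro hln k hk
      rcases Nat.eq_or_lt_of_le hk with rfl | h
      · exact le_rfl
      · exact (ih (by omega) k (Nat.lt_succ_iff.mp h)).trans (hW l (by omega)).le
  set s := Finset.univ.filter (fun lam : Fin n → Fin n =>
      (∀ i j : Fin n, i ≤ j → lam j ≤ lam i) ∧
        ∀ i : Fin n, (lam i : ℕ) + 1 ≤ lamMax n π i) with hs
  set F : (Fin n → Fin n) → Set (Fin n → ℝ) := fun lam =>
    gradedSet (Fin n) (fun i => W ((lam i : ℕ))) (fun i => W ((lam i : ℕ) + 1)) with hF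
  set E : (Fin n → Fin n) → Set (Fin n → ℝ) := fun lam =>
    (fun x : Fin n → ℝ => x ∘ ⇑π) ⁻¹' F lam with hE
  have hmeasF : ∀ lam, MeasurableSet (F lam) := fun lam => measurableSet_gradedSet _ _ _
  have hmeasE : ∀ lam, MeasurableSet (E lam) := fun lam =>
    (mp_comp π).measurable (hmeasF lam)
  have hmemE : ∀ lam (x : Fin n → ℝ), x ∈ E lam ↔
      ((∀ i, x (π i) ∈ Set.Ioc (W ((lam i : ℕ))) (W ((lam i : ℕ) + 1))) ∧
        ∀ i j : Fin n, i ≤ j → x (π j) ≤ x (π i)) := fun lam x => Iff.rfl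
  -- E lam ⊆ Cpi for lam ∈ s
  have hEsub : ∀ lam ∈ s, E lam ⊆ Cpi n W π := by
    intro lam hlam x hx
    rw [hs, Finset.mem_filter] at hlam
    obtain ⟨-, hdec, hmax⟩ := hlam
    rw [hmemE] at hx
    obtain ⟨h1, h2⟩ := hx
    refine ⟨fun i => ?_, h2⟩
    have hj := h1 (π.symm i)
    rw [π.apply_symm_apply] at hj
    set j := π.symm i with hjdef
    have hlow : (0 : ℝ) ≤ x i := by
      rw [← hW0]
      exact le_trans (hWmono _ (le_of_lt (lam j).isLt) 0 (Nat.zero_le _)) hj.1.le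
    have hup : x i ≤ W ((i : ℕ) + 1) := by
      have hle1 : (lam j : ℕ) + 1 ≤ lamMax n π j := hmax j
      have hle2 : lamMax n π j ≤ (π j : ℕ) + 1 :=
        Finset.inf'_le _ (Finset.mem_Iic.mpr le_rfl)
      have hπj : (π j : ℕ) = (i : ℕ) := by rw [hjdef, π.apply_symm_apply]
      refine le_trans hj.2 ?_
      refine hWmono ((i : ℕ) + 1) (by omega) _ (by omega)
    exact ⟨hlow, hup⟩
  -- covering
  have hcover : Cpi n W π ⊆ (⋃ lam ∈ s, E lam) ∪ (⋃ i : Fin n, {x : Fin n → ℝ | x i = 0}) := by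
    intro x hx
    by_cases hz : ∃ i, x i = 0
    · exact Or.inr (Set.mem_iUnion.mpr ⟨hz.choose, hz.choose_spec⟩)
    push_neg at hz
    left
    obtain ⟨hbox, hanti⟩ := hx
    have hpos : ∀ i, 0 < x (π i) := fun i =>
      lt_of_le_of_ne (hbox (π i)).1 (Ne.symm (hz (π i)))
    have hex : ∀ i : Fin n, ∃ k : Fin n,
        W ((k : ℕ)) < x (π i) ∧ x (π i) ≤ W ((k : ℕ) + 1) := by
      intro i
      have hub : x (π i) ≤ W (((π i) : ℕ) + 1) := (hbox (π i)).2
      set sf : Finset (Fin n) := Finset.univ.filter (fun k => W ((k : ℕ)) < x (π i)) with hsf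
      have hne : sf.Nonempty := by
        refine ⟨⟨0, hn⟩, ?_⟩
        rw [hsf, Finset.mem_filter]
        refine ⟨Finset.mem_univ _, ?_⟩
        show W ((0 : ℕ)) < x (π i)
        rw [hW0]
        exact hpos i
      set k := sf.max' hne with hk
      have hklt : W ((k : ℕ)) < x (π i) := (Finset.mem_filter.mp (sf.max'_mem hne)).2
      refine ⟨k, hklt, ?_⟩
      by_cases hkn : (k : ℕ) + 1 = n
      · refine le_trans hub ?_
        rw [hkn]
        exact hWmono n le_rfl _ (by omega)
      · have hlt : (k : ℕ) + 1 < n := Nat.lt_of_le_of_ne (Nat.succ_le_of_lt k.isLt) hkn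
        by_contra hgt
        push_neg at hgt
        have hmem : (⟨(k : ℕ) + 1, hlt⟩ : Fin n) ∈ sf := by
          rw [hsf, Finset.mem_filter]
          exact ⟨Finset.mem_univ _, hgt⟩
        have := sf.le_max' _ hmem
        rw [← hk] at this
        have := Fin.le_def.mp this
        simp only at this
        omega
    choose lam hlam1 hlam2 using hex
    have hdec : ∀ i j : Fin n, i ≤ j → lam j ≤ lam i := by
      intro i j hij
      by_contra hlt
      push_neg at hlt
      have hval : (lam i : ℕ) + 1 ≤ (lam j : ℕ) := Fin.lt_def.mp hlt
      have hchain : x (π j) ≤ W ((lam j : ℕ)) :=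
        le_trans (le_trans (hanti i j hij) (hlam2 i))
          (hWmono _ (le_of_lt (lam j).isLt) _ hval)
      exact absurd (hlam1 j) (not_lt.mpr hchain)
    have hmax : ∀ i : Fin n, (lam i : ℕ) + 1 ≤ lamMax n π i := by
      intro i
      refine Finset.le_inf' _ _ (fun j hj => ?_)
      rw [Finset.mem_Iic] at hj
      by_contra hgt
      push_neg at hgt
      have h0 : ((π j : ℕ)) + 1 ≤ (lam i : ℕ) := by omega
      have hchain : x (π i) ≤ W ((lam i : ℕ)) :=
        le_trans (le_trans (hanti j i hj) ((hbox (π j)).2))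
          (hWmono _ (le_of_lt (lam i).isLt) _ h0)
      exact absurd (hlam1 i) (not_lt.mpr hchain)
    refine Set.mem_iUnion₂.mpr ⟨lam, ?_, ?_⟩
    · rw [hs, Finset.mem_filter]
      exact ⟨Finset.mem_univ _, hdec, hmax⟩
    · rw [hmemE]
      exact ⟨fun i => ⟨hlam1 i, hlam2 i⟩, hanti⟩
  -- disjointness
  have hdisj : (↑s : Set (Fin n → Fin n)).Pairwise (Function.onFun Disjoint E) := by
    intro lam _ lam' _ hne
    rw [Function.onFun, Set.disjoint_left]
    intro x hx hx'
    rw [hmemE] at hx hx'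
    have : ∃ i, lam i ≠ lam' i := by
      by_contra hc
      push_neg at hc
      exact hne (funext hc)
    obtain ⟨i, hnei⟩ := this
    have key : ∀ mu mu' : Fin n → Fin n, mu i < mu' i →
        W ((mu i : ℕ)) < x (π i) → x (π i) ≤ W ((mu i : ℕ) + 1) →
        W ((mu' i : ℕ)) < x (π i) → False := by
      intro mu mu' hlt h1 h2 h3
      have hv : (mu i : ℕ) + 1 ≤ (mu' i : ℕ) := Fin.lt_def.mp hlt
      have : x (π i) ≤ W ((mu' i : ℕ)) :=
        le_trans h2 (hWmono _ (le_of_lt (mu' i).isLt) _ hv)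
      exact absurd h3 (not_lt.mpr this)
    rcases lt_or_gt_of_ne hnei with h | h
    · exact key lam lam' h (hx.1 i).1 (hx.1 i).2 (hx'.1 i).1
    · exact key lam' lam h (hx'.1 i).1 (hx'.1 i).2 (hx.1 i).1
  -- null set
  have hZ : volume (⋃ i : Fin n, {x : Fin n → ℝ | x i = 0}) = 0 := by
    refine measure_iUnion_null fun i => ?_
    rw [volume_pi]
    exact Measure.pi_hyperplane _ i 0
  -- decomposition of the volume
  have h1 : volume (Cpi n W π) = ∑ lam ∈ s, volume (E lam) := by
    have hle1 : volume (Cpi n W π) ≤ volume (⋃ lam ∈ s, E lam) := by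
      refine le_trans (measure_mono hcover) ?_
      refine le_trans (measure_union_le _ _) ?_
      rw [hZ]
      simp
    have hle2 : volume (⋃ lam ∈ s, E lam) ≤ volume (Cpi n W π) :=
      measure_mono (Set.iUnion₂_subset hEsub)
    rw [le_antisymm hle1 hle2]
    exact measure_biUnion_finset hdisj (fun lam _ => hmeasE lam)
  rw [h1]
  refine Finset.sum_congr rfl fun lam hlam => ?_
  rw [hs, Finset.mem_filter] at hlam
  obtain ⟨-, hdec, hmax⟩ := hlam
  -- per-term computation
  have hEF : volume (E lam) = volume (F lam) :=
    (mp_comp π).measure_preimage (hmeasF lam).nullMeasurableSet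
  set lN : Fin n → ℕ := fun i => (lam i : ℕ) with hlN
  have hFB : F lam = blockSet (Fin n) lN W (fun k => W (k + 1)) := by
    ext y
    constructor
    · rintro ⟨hy1, hy2⟩
      exact ⟨hy1, fun i j hij _ => hy2 i j hij⟩
    · rintro ⟨hy1, hy2⟩
      refine ⟨hy1, fun i j hij => ?_⟩
      by_cases hlij : lN i = lN j
      · exact hy2 i j hij hlij
      · have hle : (lam j : ℕ) ≤ (lam i : ℕ) := Fin.le_def.mp (hdec i j hij)
        have hlij' : ¬ (lam i : ℕ) = (lam j : ℕ) := hlij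
        have hji : lN j + 1 ≤ lN i := by
          show (lam j : ℕ) + 1 ≤ (lam i : ℕ)
          omega
        refine le_of_lt ?_
        calc y j ≤ W (lN j + 1) := (hy1 j).2
          _ ≤ W (lN i) := hWmono _ (le_of_lt (lam i).isLt) _ hji
          _ < y i := (hy1 i).1
  have hcd : ∀ i, W (lN i) ≤ W (lN i + 1) := fun i => (hW _ (lam i).isLt).le
  rw [hEF, hFB, volume_blockSet _ (Fin n) lN W (fun k => W (k + 1)) hcd rfl]
  -- convert the product over the image into the stated closed form
  have hnn : ∀ k ∈ Finset.image lN Finset.univ,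
      0 ≤ (W (k + 1) - W k) ^ (Nat.card {i // lN i = k}) /
        ((Nat.card {i // lN i = k}).factorial : ℝ) := by
    intro k hk
    rcases Finset.mem_image.mp hk with ⟨i, -, rfl⟩
    have h0 : (0 : ℝ) ≤ W (lN i + 1) - W (lN i) := sub_nonneg.mpr (hcd i)
    exact div_nonneg (pow_nonneg h0 _) (Nat.cast_nonneg _)
  rw [← ENNReal.ofReal_prod_of_nonneg hnn]
  congr 1
  rw [Finset.prod_div_distrib]
  have hnum : ∏ k ∈ Finset.image lN Finset.univ,
      (W (k + 1) - W k) ^ (Nat.card {i // lN i = k})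
      = ∏ i : Fin n, (W ((lam i : ℕ) + 1) - W ((lam i : ℕ))) := by
    have hinner : ∀ k ∈ Finset.image lN Finset.univ,
        (W (k + 1) - W k) ^ (Nat.card {i // lN i = k})
          = ∏ i ∈ Finset.univ.filter (fun i => lN i = k), (W (lN i + 1) - W (lN i)) := by
      intro k hk
      rw [Finset.prod_congr rfl (fun i hi => by rw [(Finset.mem_filter.mp hi).2]),
        Finset.prod_const, Nat.card_eq_fintype_card, Fintype.card_subtype]
    rw [Finset.prod_congr rfl hinner,
      Finset.prod_fiberwise_of_maps_to (fun i _ => Finset.mem_image_of_mem lN (Finset.mem_univ i))]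
  have hden : ∏ k ∈ Finset.image lN Finset.univ,
      ((Nat.card {i // lN i = k}).factorial : ℝ) = (Nat.card (stab n lam) : ℝ) := by
    rw [← Nat.cast_prod]
    congr 1
    have hcardstab : Nat.card (stab n lam)
        = Fintype.card {g : Equiv.Perm (Fin n) // lN ∘ ⇑g = lN} := by
      rw [← Nat.card_eq_fintype_card]
      refine Nat.card_congr (Equiv.subtypeEquivRight ?_)
      intro g
      constructor
      · intro hg
        have hg' : lam ∘ ⇑g = lam := hg
        funext i
        exact congrArg Fin.val (congrFun hg' i)
      · intro hg
        show lam ∘ ⇑g = lam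
        funext i
        exact Fin.val_injective (congrFun hg i)
    rw [hcardstab, DomMulAct.stabilizer_card' lN]
    exact (Finset.prod_congr rfl fun k hk => by rw [Nat.card_eq_fintype_card]).symm
  rw [hnum, hden]
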